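/- Let (H,R) be quasitriangular and let ⟨·,·⟩: R_l ⊗ R_r → k be the pairing defined via the inverse ψ of the isomorphism (R_l)^{*cop} ≅ R_r. Then for all a, a' ∈ R_l and b, b' ∈ R_r: ⟨aa', b⟩ = ⟨a, b₂⟩⟨a', b₁⟩, ⟨a, bb'⟩ = ⟨a₁, b⟩⟨a₂, b'⟩, and ⟨a, S(b)⟩ = ⟨S⁻¹(a), b⟩. -/

import Mathlib

open scoped TensorProduct

structure QuasiTriangular (k H : Type*) [CommRing k] [Ring H] [HopfAlgebra k H] where
  R : H ⊗[k] H
  Sinv : H →ₗ[k] H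
  Sinv_antipode : ∀ h : H, Sinv (HopfAlgebra.antipode (R := k) h) = h
  antipode_Sinv : ∀ h : H, HopfAlgebra.antipode (R := k) (Sinv h) = h
  comul_fst : (TensorProduct.assoc k H H H)
      ((TensorProduct.map (Coalgebra.comul (R := k)) LinearMap.id) R)
    = (Algebra.TensorProduct.map (AlgHom.id k H) Algebra.TensorProduct.includeRight) R *
      Algebra.TensorProduct.includeRight R
  comul_snd : (TensorProduct.map LinearMap.id (Coalgebra.comul (R := k))) R
    = (Algebra.TensorProduct.map (AlgHom.id k H) Algebra.TensorProduct.includeRight) R *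
      (Algebra.TensorProduct.map (AlgHom.id k H) Algebra.TensorProduct.includeLeft) R
  counit_fst : (TensorProduct.lid k H)
      ((TensorProduct.map (Coalgebra.counit (R := k)) LinearMap.id) R) = 1
  counit_snd : (TensorProduct.rid k H)
      ((TensorProduct.map LinearMap.id (Coalgebra.counit (R := k))) R) = 1
  intertwine : ∀ h : H, (TensorProduct.comm k H H) (Coalgebra.comul (R := k) h) * R
    = R * Coalgebra.comul (R := k) h

variable (k H : Type*) [CommRing k] [Ring H] [HopfAlgebra k H]

/-- `θ f = f(R¹) R²`. -/
noncomputable def qtTheta (Q : QuasiTriangular k H) (f : Module.Dual k H) : H :=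
  (TensorProduct.lid k H) ((TensorProduct.map f LinearMap.id) Q.R)

/-- `θ' f = R¹ f(R²)`. -/
noncomputable def qtThetaL (Q : QuasiTriangular k H) (f : Module.Dual k H) : H :=
  (TensorProduct.rid k H) ((TensorProduct.map LinearMap.id f) Q.R)

/-- `R_l = {R¹ f(R²) : f ∈ H*}`. -/
noncomputable def Rl (Q : QuasiTriangular k H) : Submodule k H :=
  Submodule.span k {x | ∃ f : Module.Dual k H, x = qtThetaL k H Q f}

/-- `R_r = {f(R¹) R² : f ∈ H*}`. -/
noncomputable def Rr (Q : QuasiTriangular k H) : Submodule k H :=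
  Submodule.span k {x | ∃ f : Module.Dual k H, x = qtTheta k H Q f}

/-- Convolution product of two elements of `H*`. -/
noncomputable def qtConv (f g : Module.Dual k H) : Module.Dual k H :=
  (TensorProduct.lid k k).toLinearMap ∘ₗ (TensorProduct.map f g) ∘ₗ Coalgebra.comul (R := k)

/-- A subspace of a Hopf algebra which is a Hopf subalgebra. -/
def IsHopfSubalgebra (S : Submodule k H) : Prop :=
  (1 : H) ∈ S ∧ (∀ x ∈ S, ∀ y ∈ S, x * y ∈ S) ∧
  (∀ x ∈ S, Coalgebra.comul (R := k) x ∈ LinearMap.range (TensorProduct.map S.subtype S.subtype)) ∧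
  (∀ x ∈ S, HopfAlgebra.antipode (R := k) x ∈ S)

namespace RadfordAux
open TensorProduct

variable {k H : Type*} [CommRing k] [Ring H] [HopfAlgebra k H]
variable (Q : QuasiTriangular k H)

/-! ### `Rl`/`Rr` as ranges of linear maps -/

/-- θ' as a linear map in f. -/
noncomputable def thetaLmap : Module.Dual k H →ₗ[k] H where
  toFun f := qtThetaL k H Q f
  map_add' f g := by simp [qtThetaL, TensorProduct.map_add_right]
  map_smul' c f := by simp [qtThetaL, TensorProduct.map_smul_right]

/-- θ as a linear map in f. -/
noncomputable def thetaRmap : Module.Dual k H →ₗ[k] H where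
  toFun f := qtTheta k H Q f
  map_add' f g := by simp [qtTheta, TensorProduct.map_add_left]
  map_smul' c f := by simp [qtTheta, TensorProduct.map_smul_left]

lemma Rl_eq_range : Rl k H Q = LinearMap.range (thetaLmap Q) := by
  rw [Rl]
  have : {x | ∃ f : Module.Dual k H, x = qtThetaL k H Q f}
      = (LinearMap.range (thetaLmap Q) : Set H) := by
    ext x
    simp [thetaLmap, eq_comm, LinearMap.mem_range]
    exact Iff.rfl
  rw [this, Submodule.span_eq]

lemma Rr_eq_range : Rr k H Q = LinearMap.range (thetaRmap Q) := by
  rw [Rr]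
  have : {x | ∃ f : Module.Dual k H, x = qtTheta k H Q f}
      = (LinearMap.range (thetaRmap Q) : Set H) := by
    ext x
    simp [thetaRmap, eq_comm, LinearMap.mem_range]
    exact Iff.rfl
  rw [this, Submodule.span_eq]

lemma thetaL_mem (f : Module.Dual k H) : qtThetaL k H Q f ∈ Rl k H Q :=
  Submodule.subset_span ⟨f, rfl⟩

lemma theta_mem (f : Module.Dual k H) : qtTheta k H Q f ∈ Rr k H Q :=
  Submodule.subset_span ⟨f, rfl⟩

lemma exists_of_mem_Rl {a : H} (ha : a ∈ Rl k H Q) : ∃ f, a = qtThetaL k H Q f := by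
  rw [Rl_eq_range] at ha
  obtain ⟨f, hf⟩ := ha
  exact ⟨f, hf.symm⟩

lemma exists_of_mem_Rr {b : H} (hb : b ∈ Rr k H Q) : ∃ f, b = qtTheta k H Q f := by
  rw [Rr_eq_range] at hb
  obtain ⟨f, hf⟩ := hb
  exact ⟨f, hf.symm⟩

/-! ### contraction of the last two legs -/

noncomputable def contr23 (β α : Module.Dual k H) : H ⊗[k] (H ⊗[k] H) →ₗ[k] H :=
  (TensorProduct.rid k H).toLinearMap ∘ₗ
    map LinearMap.id ((TensorProduct.lid k k).toLinearMap ∘ₗ map β α)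

lemma contr23_tmul (β α : Module.Dual k H) (x u v : H) :
    contr23 β α (x ⊗ₜ (u ⊗ₜ v)) = (β u * α v) • x := by
  simp [contr23, smul_smul, mul_comm]

lemma I2 (β α : Module.Dual k H) (s t : H ⊗[k] H) :
    contr23 β α
      ((Algebra.TensorProduct.map (AlgHom.id k H) Algebra.TensorProduct.includeRight s) *
       (Algebra.TensorProduct.map (AlgHom.id k H) Algebra.TensorProduct.includeLeft t))
    = ((TensorProduct.rid k H) (map LinearMap.id α s)) *
      ((TensorProduct.rid k H) (map LinearMap.id β t)) := by
  induction s using TensorProduct.induction_on with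
  | zero => simp
  | add s₁ s₂ h₁ h₂ => simp only [map_add, add_mul, h₁, h₂]
  | tmul x y =>
    induction t using TensorProduct.induction_on with
    | zero => simp
    | add t₁ t₂ h₁ h₂ => simp only [map_add, mul_add, h₁, h₂]
    | tmul u v =>
      simp only [Algebra.TensorProduct.map_tmul, AlgHom.coe_id, id_eq,
        Algebra.TensorProduct.includeRight_apply, Algebra.TensorProduct.includeLeft_apply,
        Algebra.TensorProduct.tmul_mul_tmul, one_mul, mul_one, contr23_tmul,
        map_tmul, LinearMap.id_coe, rid_tmul]
      rw [smul_mul_smul_comm, mul_comm (α y) (β v)]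

lemma I1 (β α : Module.Dual k H) (t : H ⊗[k] H) :
    contr23 β α (map LinearMap.id (Coalgebra.comul (R := k)) t)
      = (TensorProduct.rid k H) (map LinearMap.id (qtConv k H β α) t) := by
  have : (contr23 β α ∘ₗ map LinearMap.id (Coalgebra.comul (R := k)))
      = ((TensorProduct.rid k H).toLinearMap ∘ₗ map LinearMap.id (qtConv k H β α)) := by
    ext x y
    simp [contr23, qtConv, smul_smul, mul_comm]
  exact LinearMap.congr_fun this t

lemma I4 (f β α : Module.Dual k H) (X : H ⊗[k] (H ⊗[k] H)) :
    (TensorProduct.lid k k)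
      ((map β α) ((TensorProduct.lid k (H ⊗[k] H)) ((map f LinearMap.id) X)))
    = f (contr23 β α X) := by
  have : ((TensorProduct.lid k k).toLinearMap ∘ₗ map β α ∘ₗ
        (TensorProduct.lid k (H ⊗[k] H)).toLinearMap ∘ₗ (map f LinearMap.id))
      = (f ∘ₗ contr23 β α) := by
    ext x u v
    simp [contr23, smul_smul, mul_comm, mul_left_comm]
  exact LinearMap.congr_fun this X

/-- `θ'(α) θ'(β) = θ'(β ⋆ α)`. -/
lemma thetaL_mul (α β : Module.Dual k H) :
    qtThetaL k H Q α * qtThetaL k H Q β = qtThetaL k H Q (qtConv k H β α) := by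
  have h := congrArg (contr23 β α) Q.comul_snd
  rw [I1, I2] at h
  exact h.symm

/-- comultiplication of `θ f`. -/
lemma comul_theta (f : Module.Dual k H) :
    Coalgebra.comul (R := k) (qtTheta k H Q f)
      = (TensorProduct.lid k (H ⊗[k] H))
          ((map f LinearMap.id) ((map LinearMap.id (Coalgebra.comul (R := k))) Q.R)) := by
  have : ((Coalgebra.comul (R := k)) ∘ₗ (TensorProduct.lid k H).toLinearMap ∘ₗ
        (map f LinearMap.id))
      = ((TensorProduct.lid k (H ⊗[k] H)).toLinearMap ∘ₗ (map f LinearMap.id) ∘ₗ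
        (map LinearMap.id (Coalgebra.comul (R := k)))) := by
    ext x y
    simp
  exact LinearMap.congr_fun this Q.R

-- contraction of first two legs
noncomputable def c12 (f g : Module.Dual k H) : H ⊗[k] (H ⊗[k] H) →ₗ[k] H :=
  (TensorProduct.lid k H).toLinearMap ∘ₗ
    map f ((TensorProduct.lid k H).toLinearMap ∘ₗ map g LinearMap.id)

lemma c12_tmul (f g : Module.Dual k H) (x u v : H) :
    c12 f g (x ⊗ₜ (u ⊗ₜ v)) = (f x * g u) • v := by
  simp [c12, smul_smul, mul_comm]

lemma c12_assoc (f g : Module.Dual k H) :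
    (c12 f g ∘ₗ (TensorProduct.assoc k H H H).toLinearMap)
      = (TensorProduct.lid k H).toLinearMap ∘ₗ
          map ((TensorProduct.lid k k).toLinearMap ∘ₗ map f g) LinearMap.id := by
  ext x y z
  simp [c12, smul_smul, mul_comm]

lemma I5 (f g : Module.Dual k H) (t : H ⊗[k] H) :
    c12 f g ((TensorProduct.assoc k H H H)
        ((map (Coalgebra.comul (R := k)) LinearMap.id) t))
      = (TensorProduct.lid k H) (map (qtConv k H f g) LinearMap.id t) := by
  have h1 := LinearMap.congr_fun (c12_assoc f g)
      ((map (Coalgebra.comul (R := k)) LinearMap.id) t)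
  simp only [LinearMap.coe_comp, Function.comp_apply, LinearEquiv.coe_coe] at h1
  rw [h1, ← LinearMap.comp_apply, ← TensorProduct.map_comp]
  rfl

lemma I6 (f g : Module.Dual k H) (s t : H ⊗[k] H) :
    c12 f g
      ((Algebra.TensorProduct.map (AlgHom.id k H) Algebra.TensorProduct.includeRight s) *
       (Algebra.TensorProduct.includeRight t : H ⊗[k] (H ⊗[k] H)))
    = ((TensorProduct.lid k H) (map f LinearMap.id s)) *
      ((TensorProduct.lid k H) (map g LinearMap.id t)) := by
  induction s using TensorProduct.induction_on with
  | zero => simp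
  | add s₁ s₂ h₁ h₂ => simp only [map_add, add_mul, h₁, h₂]
  | tmul x y =>
    induction t using TensorProduct.induction_on with
    | zero => simp
    | add t₁ t₂ h₁ h₂ => simp only [map_add, mul_add, h₁, h₂]
    | tmul u v =>
      simp only [Algebra.TensorProduct.map_tmul, AlgHom.coe_id, id_eq,
        Algebra.TensorProduct.includeRight_apply,
        Algebra.TensorProduct.tmul_mul_tmul, one_mul, mul_one, c12_tmul,
        map_tmul, LinearMap.id_coe, lid_tmul]
      rw [smul_mul_smul_comm]



noncomputable def contrLast (h : Module.Dual k H) : H ⊗[k] (H ⊗[k] H) →ₗ[k] (H ⊗[k] H) :=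
  map LinearMap.id ((TensorProduct.rid k H).toLinearMap ∘ₗ map LinearMap.id h)

lemma contrLast_assoc (h : Module.Dual k H) :
    (contrLast h ∘ₗ (TensorProduct.assoc k H H H).toLinearMap)
      = (TensorProduct.rid k (H ⊗[k] H)).toLinearMap ∘ₗ map LinearMap.id h := by
  ext x y z
  simp [contrLast]

lemma E1 (h : Module.Dual k H) (t : H ⊗[k] H) :
    Coalgebra.comul (R := k) ((TensorProduct.rid k H) (map LinearMap.id h t))
      = (TensorProduct.rid k (H ⊗[k] H)) (map (Coalgebra.comul (R := k)) h t) := by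
  have : ((Coalgebra.comul (R := k)) ∘ₗ (TensorProduct.rid k H).toLinearMap ∘ₗ
        map LinearMap.id h)
      = ((TensorProduct.rid k (H ⊗[k] H)).toLinearMap ∘ₗ map (Coalgebra.comul (R := k)) h) := by
    ext x y
    simp
  exact LinearMap.congr_fun this t

lemma I7 (h : Module.Dual k H) (t : H ⊗[k] H) :
    Coalgebra.comul (R := k) ((TensorProduct.rid k H) (map LinearMap.id h t))
      = contrLast h ((TensorProduct.assoc k H H H) ((map (Coalgebra.comul (R := k)) LinearMap.id) t)) := by
  rw [E1]
  have h1 : map (Coalgebra.comul (R := k)) h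
      = (map (LinearMap.id : H ⊗[k] H →ₗ[k] H ⊗[k] H) h) ∘ₗ
        (map (Coalgebra.comul (R := k)) (LinearMap.id : H →ₗ[k] H)) := by
    rw [← TensorProduct.map_comp, LinearMap.id_comp, LinearMap.comp_id]
  rw [h1]
  have := LinearMap.congr_fun (contrLast_assoc (k := k) (H := H) h)
    ((map (Coalgebra.comul (R := k)) LinearMap.id) t)
  simp only [LinearMap.coe_comp, Function.comp_apply, LinearEquiv.coe_coe] at this ⊢
  rw [this]

lemma I8 (h : Module.Dual k H) (x e : H) (t : H ⊗[k] H) :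
    contrLast h
      ((Algebra.TensorProduct.map (AlgHom.id k H) Algebra.TensorProduct.includeRight (x ⊗ₜ[k] e)) *
       (Algebra.TensorProduct.includeRight t : H ⊗[k] (H ⊗[k] H)))
    = x ⊗ₜ[k] ((TensorProduct.rid k H)
        (map LinearMap.id (h ∘ₗ LinearMap.mulLeft k e) t)) := by
  induction t using TensorProduct.induction_on with
  | zero => simp
  | add t₁ t₂ h₁ h₂ => simp only [map_add, mul_add, h₁, h₂, tmul_add]
  | tmul u v =>
    simp [contrLast, Algebra.TensorProduct.tmul_mul_tmul, tmul_smul]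

section FieldAux
variable {k H : Type*} [Field k] [Ring H] [HopfAlgebra k H]


-- representation lemma
lemma rep_lemma (t : H ⊗[k] H) :
    ∃ (s : Finset (Module.Basis.ofVectorSpaceIndex k H)) (m : Module.Basis.ofVectorSpaceIndex k H → H),
      (∀ i, m i = (TensorProduct.rid k H)
        (map LinearMap.id ((Module.Basis.ofVectorSpace k H).coord i) t)) ∧
      t = ∑ i ∈ s, (m i) ⊗ₜ[k] ((Module.Basis.ofVectorSpace k H) i) := by
  classical
  set bH := Module.Basis.ofVectorSpace k H with hbH
  set F : H ⊗[k] H ≃ₗ[k] (Module.Basis.ofVectorSpaceIndex k H →₀ H) :=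
    (LinearEquiv.lTensor H bH.repr).trans
      (TensorProduct.finsuppScalarRight k k H (Module.Basis.ofVectorSpaceIndex k H)) with hF
  set w := F t with hw
  refine ⟨w.support, fun i => w i, ?_, ?_⟩
  · intro i
    -- (F t) i = rid (map id (coord i) t)
    have : ((Finsupp.lapply i : (_ →₀ H) →ₗ[k] H) ∘ₗ (F : H ⊗[k] H →ₗ[k] _))
        = (TensorProduct.rid k H).toLinearMap ∘ₗ map LinearMap.id (bH.coord i) := by
      ext x y
      simp [hF, Module.Basis.coord_apply, mul_comm]
    have h2 := LinearMap.congr_fun this t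
    simpa [hw] using h2
  · -- t = F.symm w = ∑ single
    have hsymm : ∀ (i : _) (m : H), F.symm (Finsupp.single i m) = m ⊗ₜ[k] bH i := by
      intro i m
      simp [hF, LinearEquiv.lTensor]
    have hw2 : (∑ i ∈ w.support, Finsupp.single i (w i)) = w := by
      have h3 := Finsupp.sum_single w
      rwa [Finsupp.sum] at h3
    calc t = F.symm w := (F.symm_apply_apply t).symm
      _ = F.symm (∑ i ∈ w.support, Finsupp.single i (w i)) := by rw [hw2]
      _ = ∑ i ∈ w.support, (w i) ⊗ₜ[k] bH i := by
          rw [map_sum]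
          exact Finset.sum_congr rfl fun i _ => hsymm i (w i)

lemma lemB (Q : QuasiTriangular k H) :
    ∀ a ∈ Rl k H Q, Coalgebra.comul (R := k) a ∈
      LinearMap.range (map (Rl k H Q).subtype (Rl k H Q).subtype) := by
  classical
  intro a ha
  have hle : Rl k H Q ≤ Submodule.comap (Coalgebra.comul (R := k) : H →ₗ[k] H ⊗[k] H)
      (LinearMap.range (map (Rl k H Q).subtype (Rl k H Q).subtype)) := by
    rw [Rl]
    apply Submodule.span_le.mpr
    rintro x ⟨h, rfl⟩
    simp only [SetLike.mem_coe, Submodule.mem_comap]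
    rw [qtThetaL, I7 h Q.R, Q.comul_fst]
    obtain ⟨s, m, hm, hrep⟩ := rep_lemma Q.R
    nth_rewrite 1 [hrep]
    rw [map_sum, Finset.sum_mul, map_sum]
    apply Submodule.sum_mem
    intro i _
    rw [I8]
    refine ⟨(⟨m i, ?_⟩ : Rl k H Q) ⊗ₜ[k]
      (⟨qtThetaL k H Q (h ∘ₗ LinearMap.mulLeft k ((Module.Basis.ofVectorSpace k H) i)),
        thetaL_mem Q _⟩ : Rl k H Q), by exact TensorProduct.map_tmul _ _ _ _⟩
    rw [hm i]
    exact thetaL_mem Q _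
  exact hle ha

end FieldAux

section Antipode



local notation "S°" => (HopfAlgebra.antipode (R := k) : H →ₗ[k] H)
local notation "Δ°" => (Coalgebra.comul (R := k) : H →ₗ[k] H ⊗[k] H)
local notation "ε°" => (Coalgebra.counit (R := k) : H →ₗ[k] k)

noncomputable def Phi1 : H ⊗[k] (H ⊗[k] H) →ₗ[k] H ⊗[k] H :=
  map (LinearMap.mul' k H ∘ₗ map S° LinearMap.id) LinearMap.id ∘ₗ
    (TensorProduct.assoc k H H H).symm.toLinearMap

noncomputable def Phi2 : H ⊗[k] (H ⊗[k] H) →ₗ[k] H ⊗[k] H :=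
  map (LinearMap.mul' k H ∘ₗ map LinearMap.id S°) LinearMap.id ∘ₗ
    (TensorProduct.assoc k H H H).symm.toLinearMap

lemma hS_r : LinearMap.mul' k H ∘ₗ map S° (LinearMap.id : H →ₗ[k] H) ∘ₗ Δ°
    = Algebra.linearMap k H ∘ₗ ε° := by
  rw [← HopfAlgebra.mul_antipode_rTensor_comul (R := k) (A := H)]
  rfl

lemma hS_l : LinearMap.mul' k H ∘ₗ map (LinearMap.id : H →ₗ[k] H) S° ∘ₗ Δ°
    = Algebra.linearMap k H ∘ₗ ε° := by
  rw [← HopfAlgebra.mul_antipode_lTensor_comul (R := k) (A := H)]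
  rfl

lemma Phi1_L (t : H ⊗[k] H) :
    Phi1 ((TensorProduct.assoc k H H H) (map Δ° LinearMap.id t))
      = map (Algebra.linearMap k H ∘ₗ ε°) LinearMap.id t := by
  have h0 : (Phi1 ∘ₗ (TensorProduct.assoc k H H H).toLinearMap) ∘ₗ map Δ° LinearMap.id
      = map (Algebra.linearMap k H ∘ₗ ε°) LinearMap.id := by
    have h1 : Phi1 ∘ₗ (TensorProduct.assoc k H H H).toLinearMap
        = map (LinearMap.mul' k H ∘ₗ map S° LinearMap.id) LinearMap.id := by
      ext x y z
      simp [Phi1]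
    rw [h1, ← TensorProduct.map_comp, LinearMap.comp_id, ← hS_r]
    rw [LinearMap.comp_assoc]
  exact LinearMap.congr_fun h0 t

lemma Phi2_L (t : H ⊗[k] H) :
    Phi2 ((TensorProduct.assoc k H H H) (map Δ° LinearMap.id t))
      = map (Algebra.linearMap k H ∘ₗ ε°) LinearMap.id t := by
  have h0 : (Phi2 ∘ₗ (TensorProduct.assoc k H H H).toLinearMap) ∘ₗ map Δ° LinearMap.id
      = map (Algebra.linearMap k H ∘ₗ ε°) LinearMap.id := by
    have h1 : Phi2 ∘ₗ (TensorProduct.assoc k H H H).toLinearMap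
        = map (LinearMap.mul' k H ∘ₗ map LinearMap.id S°) LinearMap.id := by
      ext x y z
      simp [Phi2]
    rw [h1, ← TensorProduct.map_comp, LinearMap.comp_id, ← hS_l]
    rw [LinearMap.comp_assoc]
  exact LinearMap.congr_fun h0 t

lemma E3 (t : H ⊗[k] H) :
    map (Algebra.linearMap k H ∘ₗ ε°) LinearMap.id t
      = Algebra.TensorProduct.includeRight
          ((TensorProduct.lid k H) (map ε° LinearMap.id t)) := by
  have h0 : (map (Algebra.linearMap k H ∘ₗ ε°) LinearMap.id : H ⊗[k] H →ₗ[k] H ⊗[k] H)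
      = (Algebra.TensorProduct.includeRight).toLinearMap ∘ₗ
          (TensorProduct.lid k H).toLinearMap ∘ₗ map ε° LinearMap.id := by
    ext x y
    simp [Algebra.algebraMap_eq_smul_one, smul_tmul]
  exact LinearMap.congr_fun h0 t

lemma Phi1_R (s t : H ⊗[k] H) :
    Phi1 ((Algebra.TensorProduct.map (AlgHom.id k H) Algebra.TensorProduct.includeRight s) *
        (Algebra.TensorProduct.includeRight t : H ⊗[k] (H ⊗[k] H)))
      = (map S° LinearMap.id s) * t := by
  induction s using TensorProduct.induction_on with
  | zero => simp
  | add s₁ s₂ h₁ h₂ => simp only [map_add, add_mul, h₁, h₂]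
  | tmul x y =>
    induction t using TensorProduct.induction_on with
    | zero => simp
    | add t₁ t₂ h₁ h₂ => simp only [map_add, mul_add, h₁, h₂]
    | tmul u v =>
      simp [Phi1, Algebra.TensorProduct.tmul_mul_tmul]

lemma Phi2_R (s t : H ⊗[k] H) :
    Phi2 ((Algebra.TensorProduct.map (AlgHom.id k H) Algebra.TensorProduct.includeRight s) *
        (Algebra.TensorProduct.includeRight t : H ⊗[k] (H ⊗[k] H)))
      = s * (map S° LinearMap.id t) := by
  induction s using TensorProduct.induction_on with
  | zero => simp
  | add s₁ s₂ h₁ h₂ => simp only [map_add, add_mul, h₁, h₂]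
  | tmul x y =>
    induction t using TensorProduct.induction_on with
    | zero => simp
    | add t₁ t₂ h₁ h₂ => simp only [map_add, mul_add, h₁, h₂]
    | tmul u v =>
      simp [Phi2, Algebra.TensorProduct.tmul_mul_tmul]

section QT
variable (R : H ⊗[k] H)
variable (comul_fst : (TensorProduct.assoc k H H H)
      ((TensorProduct.map (Coalgebra.comul (R := k)) LinearMap.id) R)
    = (Algebra.TensorProduct.map (AlgHom.id k H) Algebra.TensorProduct.includeRight) R *
      Algebra.TensorProduct.includeRight R)
variable (counit_fst : (TensorProduct.lid k H)
      ((TensorProduct.map (Coalgebra.counit (R := k)) LinearMap.id) R) = 1)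
variable (comul_snd : (TensorProduct.map LinearMap.id (Coalgebra.comul (R := k))) R
    = (Algebra.TensorProduct.map (AlgHom.id k H) Algebra.TensorProduct.includeRight) R *
      (Algebra.TensorProduct.map (AlgHom.id k H) Algebra.TensorProduct.includeLeft) R)
variable (counit_snd : (TensorProduct.rid k H)
      ((TensorProduct.map LinearMap.id (Coalgebra.counit (R := k))) R) = 1)

include comul_fst counit_fst in
lemma hV1 : (map S° LinearMap.id R) * R = 1 := by
  have h := congrArg (Phi1 (k := k) (H := H)) comul_fst
  rw [Phi1_R, Phi1_L, E3, counit_fst, map_one] at h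
  exact h.symm

include comul_fst counit_fst in
lemma hV2 : R * (map S° LinearMap.id R) = 1 := by
  have h := congrArg (Phi2 (k := k) (H := H)) comul_fst
  rw [Phi2_R, Phi2_L, E3, counit_fst, map_one] at h
  exact h.symm

lemma hDeltaA :
    (Algebra.TensorProduct.map (AlgHom.id k H) (Bialgebra.comulAlgHom k H) :
        H ⊗[k] H →ₐ[k] H ⊗[k] (H ⊗[k] H)).toLinearMap
      = map LinearMap.id Δ° := by
  ext x y
  simp

lemma antipode_one' : S° (1 : H) = 1 := by
  have h := HopfAlgebra.mul_antipode_rTensor_comul_apply (R := k) (A := H) 1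
  simpa [Algebra.TensorProduct.one_def] using h

include comul_fst counit_fst comul_snd counit_snd in
lemma hSS : map S° S° R = R := by
  classical
  set A' := (Algebra.TensorProduct.map (AlgHom.id k H) Algebra.TensorProduct.includeRight :
    H ⊗[k] H →ₐ[k] H ⊗[k] (H ⊗[k] H)) with hA'
  set B' := (Algebra.TensorProduct.map (AlgHom.id k H) Algebra.TensorProduct.includeLeft :
    H ⊗[k] H →ₐ[k] H ⊗[k] (H ⊗[k] H)) with hB'
  set ΔA := (Algebra.TensorProduct.map (AlgHom.id k H) (Bialgebra.comulAlgHom k H) :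
    H ⊗[k] H →ₐ[k] H ⊗[k] (H ⊗[k] H)) with hΔA
  set V := map S° (LinearMap.id : H →ₗ[k] H) R with hVdef
  have hv1 : V * R = 1 := hV1 R comul_fst counit_fst
  have hv2 : R * V = 1 := hV2 R comul_fst counit_fst

  -- ΔA V = B' V * A' V
  have hX : ΔA R = A' R * B' R := by
    have := LinearMap.congr_fun (hDeltaA (k := k) (H := H)) R
    rw [hΔA]
    exact this.trans comul_snd
  have hXV : ΔA V = map LinearMap.id Δ° V := LinearMap.congr_fun (hDeltaA (k := k) (H := H)) V
  have h1 : ΔA V * ΔA R = 1 := by rw [← map_mul, hv1, map_one]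
  have h2 : (A' R * B' R) * (B' V * A' V) = 1 := by
    have hb : B' R * B' V = 1 := by rw [← map_mul, hv2, map_one]
    have ha : A' R * A' V = 1 := by rw [← map_mul, hv2, map_one]
    calc (A' R * B' R) * (B' V * A' V) = A' R * ((B' R * B' V) * A' V) := by
          rw [mul_assoc, mul_assoc]
      _ = A' R * A' V := by rw [hb, one_mul]
      _ = 1 := ha
  have hinv : ΔA V = B' V * A' V := by
    calc ΔA V = ΔA V * ((A' R * B' R) * (B' V * A' V)) := by rw [h2, mul_one]
      _ = (ΔA V * (A' R * B' R)) * (B' V * A' V) := (mul_assoc _ _ _).symm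
      _ = (ΔA V * ΔA R) * (B' V * A' V) := by rw [hX]
      _ = B' V * A' V := by rw [h1, one_mul]
  -- apply Phi''
  set Φ'' := (map LinearMap.id (LinearMap.mul' k H ∘ₗ map LinearMap.id S°) :
    H ⊗[k] (H ⊗[k] H) →ₗ[k] H ⊗[k] H) with hPhi''
  have hL : Φ'' (map LinearMap.id Δ° V) = map LinearMap.id (Algebra.linearMap k H ∘ₗ ε°) V := by
    rw [hPhi'', ← LinearMap.comp_apply, ← TensorProduct.map_comp, LinearMap.comp_id, ← hS_l,
      LinearMap.comp_assoc]
  have hE4 : map LinearMap.id (Algebra.linearMap k H ∘ₗ ε°) V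
      = (Algebra.TensorProduct.includeLeft : H →ₐ[k] H ⊗[k] H)
          ((TensorProduct.rid k H) (map LinearMap.id ε° V)) := by
    have h0 : (map (LinearMap.id : H →ₗ[k] H) (Algebra.linearMap k H ∘ₗ ε°))
        = (Algebra.TensorProduct.includeLeft : H →ₐ[k] H ⊗[k] H).toLinearMap ∘ₗ
            (TensorProduct.rid k H).toLinearMap ∘ₗ map LinearMap.id ε° := by
      ext x y
      simp [Algebra.algebraMap_eq_smul_one, smul_tmul, tmul_smul]
    exact LinearMap.congr_fun h0 V
  have hepsV : (TensorProduct.rid k H) (map LinearMap.id ε° V) = 1 := by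
    have h0 : ((TensorProduct.rid k H).toLinearMap ∘ₗ map (LinearMap.id : H →ₗ[k] H) ε° ∘ₗ
          map S° (LinearMap.id : H →ₗ[k] H))
        = S° ∘ₗ (TensorProduct.rid k H).toLinearMap ∘ₗ map LinearMap.id ε° := by
      ext x y
      simp
    have h1 := LinearMap.congr_fun h0 R
    simp only [LinearMap.coe_comp, Function.comp_apply, LinearEquiv.coe_coe] at h1
    rw [hVdef, h1, counit_snd, antipode_one']
  have hR'' : ∀ s t : H ⊗[k] H, Φ'' (B' s * A' t) = s * map LinearMap.id S° t := by
    intro s t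
    induction s using TensorProduct.induction_on with
    | zero => simp
    | add s₁ s₂ g₁ g₂ => simp only [map_add, add_mul, g₁, g₂]
    | tmul x y =>
      induction t using TensorProduct.induction_on with
      | zero => simp
      | add t₁ t₂ g₁ g₂ => simp only [map_add, mul_add, g₁, g₂]
      | tmul u v =>
        simp [hPhi'', hA', hB', Algebra.TensorProduct.tmul_mul_tmul]
  have hkey : V * map LinearMap.id S° V = 1 := by
    have h := congrArg Φ'' hinv
    rw [hXV] at h  -- ?
    rw [hL, hE4, hepsV, map_one] at h
    rw [hR''] at h
    exact h.symm
  have hfin : map LinearMap.id S° V = R := by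
    calc map LinearMap.id S° V = (R * V) * map LinearMap.id S° V := by rw [hv2, one_mul]
      _ = R * (V * map LinearMap.id S° V) := by rw [mul_assoc]
      _ = R := by rw [hkey, mul_one]
  have hcomp : (map (LinearMap.id : H →ₗ[k] H) S°) ∘ₗ (map S° (LinearMap.id : H →ₗ[k] H))
      = map S° S° := by
    rw [← TensorProduct.map_comp, LinearMap.id_comp, LinearMap.comp_id]
  calc map S° S° R = map LinearMap.id S° (map S° LinearMap.id R) :=
        (LinearMap.congr_fun hcomp R).symm
    _ = R := hfin

end QT


lemma hSSQ (Q : QuasiTriangular k H) : map S° S° Q.R = Q.R :=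
  hSS Q.R Q.comul_fst Q.counit_fst Q.comul_snd Q.counit_snd

lemma antipode_theta (Q : QuasiTriangular k H) (f : Module.Dual k H) :
    S° (qtTheta k H Q f) = qtTheta k H Q (f ∘ₗ Q.Sinv) := by
  have E6 : S° ∘ₗ (TensorProduct.lid k H).toLinearMap ∘ₗ map f (LinearMap.id : H →ₗ[k] H)
      = (TensorProduct.lid k H).toLinearMap ∘ₗ map f S° := by
    ext x y
    simp
  have h1 : map (f ∘ₗ Q.Sinv) (LinearMap.id : H →ₗ[k] H) (map S° S° Q.R)
      = map f S° Q.R := by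
    have hfS : (f ∘ₗ Q.Sinv) ∘ₗ S° = f := by
      apply LinearMap.ext; intro x; simp [Q.Sinv_antipode]
    rw [← LinearMap.comp_apply, ← TensorProduct.map_comp, hfS, LinearMap.id_comp]
  have h2 := LinearMap.congr_fun E6 Q.R
  simp only [LinearMap.coe_comp, Function.comp_apply, LinearEquiv.coe_coe] at h2
  rw [qtTheta, qtTheta, h2, ← h1, hSSQ]

lemma Sinv_thetaL (Q : QuasiTriangular k H) (h : Module.Dual k H) :
    Q.Sinv (qtThetaL k H Q h) = qtThetaL k H Q (h ∘ₗ S°) := by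
  have E7 : Q.Sinv ∘ₗ (TensorProduct.rid k H).toLinearMap ∘ₗ map (LinearMap.id : H →ₗ[k] H) h
      = (TensorProduct.rid k H).toLinearMap ∘ₗ map Q.Sinv h := by
    ext x y
    simp
  have h1 : map Q.Sinv h (map S° S° Q.R)
      = map (LinearMap.id : H →ₗ[k] H) (h ∘ₗ S°) Q.R := by
    have hSinvS : Q.Sinv ∘ₗ S° = LinearMap.id := by
      apply LinearMap.ext; intro x; simp [Q.Sinv_antipode]
    rw [← LinearMap.comp_apply, ← TensorProduct.map_comp, hSinvS]
  have h2 := LinearMap.congr_fun E7 Q.R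
  simp only [LinearMap.coe_comp, Function.comp_apply, LinearEquiv.coe_coe] at h2
  rw [qtThetaL, qtThetaL, h2, ← h1, hSSQ]

lemma Sinv_mem_Rl (Q : QuasiTriangular k H) {a : H} (ha : a ∈ Rl k H Q) :
    Q.Sinv a ∈ Rl k H Q := by
  have hle : Rl k H Q ≤ Submodule.comap Q.Sinv (Rl k H Q) := by
    rw [Rl]
    apply Submodule.span_le.mpr
    rintro x ⟨h, rfl⟩
    simp only [SetLike.mem_coe, Submodule.mem_comap]
    rw [Sinv_thetaL Q h]
    exact thetaL_mem Q _
  exact hle ha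

end Antipode

end RadfordAux

theorem radford_pairing_properties
    (k H : Type*) [Field k] [Ring H] [HopfAlgebra k H] (Q : QuasiTriangular k H)
    (pairL : H →ₗ[k] H →ₗ[k] k)
    (hchar : ∀ (f : Module.Dual k H) (a : H), a ∈ Rl k H Q →
      pairL a (qtTheta k H Q f) = f a) :
    ∀ a ∈ Rl k H Q, ∀ a' ∈ Rl k H Q, ∀ b ∈ Rr k H Q, ∀ b' ∈ Rr k H Q,
      -- ⟨a a', b⟩ = ⟨a, b₂⟩ ⟨a', b₁⟩
      (pairL (a * a') b
        = (TensorProduct.lid k k)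
            ((TensorProduct.map (pairL a') (pairL a)) (Coalgebra.comul (R := k) b))) ∧
      -- ⟨a, b b'⟩ = ⟨a₁, b⟩ ⟨a₂, b'⟩
      (pairL a (b * b')
        = (TensorProduct.lid k k)
            ((TensorProduct.map (pairL.flip b) (pairL.flip b')) (Coalgebra.comul (R := k) a))) ∧
      -- ⟨a, S(b)⟩ = ⟨S⁻¹(a), b⟩
      (pairL a (HopfAlgebra.antipode (R := k) b) = pairL (Q.Sinv a) b) := by
  classical
  open RadfordAux in
  -- Lemma A : `θ'(⟨a,·⟩) = a` for `a ∈ Rl`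
  have swap_pair : ∀ (f α : Module.Dual k H) (t : H ⊗[k] H),
      f ((TensorProduct.rid k H) ((TensorProduct.map LinearMap.id α) t))
        = α ((TensorProduct.lid k H) ((TensorProduct.map f LinearMap.id) t)) := by
    intro f α t
    have : (f ∘ₗ (TensorProduct.rid k H).toLinearMap ∘ₗ (TensorProduct.map LinearMap.id α))
        = (α ∘ₗ (TensorProduct.lid k H).toLinearMap ∘ₗ (TensorProduct.map f LinearMap.id)) := by
      ext x y
      simp [mul_comm]
    exact LinearMap.congr_fun this t
  have lemA : ∀ a ∈ Rl k H Q, qtThetaL k H Q (pairL a) = a := by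
    intro a ha
    rw [← sub_eq_zero, ← Module.forall_dual_apply_eq_zero_iff k]
    intro ξ
    rw [map_sub, sub_eq_zero]
    calc ξ (qtThetaL k H Q (pairL a)) = (pairL a) (qtTheta k H Q ξ) := swap_pair ξ (pairL a) Q.R
      _ = ξ a := hchar ξ a ha
  intro a ha a' ha' b hb b' hb'
  obtain ⟨f, rfl⟩ := exists_of_mem_Rr Q hb
  obtain ⟨g, rfl⟩ := exists_of_mem_Rr Q hb'
  refine ⟨?_, ?_, ?_⟩
  · -- statement 1
    have hmul : a * a' = qtThetaL k H Q (qtConv k H (pairL a') (pairL a)) := by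
      conv_lhs => rw [← lemA a ha, ← lemA a' ha']
      exact thetaL_mul Q (pairL a) (pairL a')
    rw [hmul, hchar f _ (thetaL_mem Q _), comul_theta, I4, I1]
    rfl
  · -- statement 2
    have hbb : qtTheta k H Q f * qtTheta k H Q g = qtTheta k H Q (qtConv k H f g) := by
      have h := congrArg (c12 f g) Q.comul_fst
      rw [I5, I6] at h
      exact h.symm
    obtain ⟨w, hw⟩ := lemB Q a ha
    have comp_eq : ∀ (φ ψ : Module.Dual k H),
        TensorProduct.map φ ψ ((TensorProduct.map (Rl k H Q).subtype (Rl k H Q).subtype) w)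
          = TensorProduct.map (φ ∘ₗ (Rl k H Q).subtype) (ψ ∘ₗ (Rl k H Q).subtype) w := by
      intro φ ψ
      rw [TensorProduct.map_comp]
      rfl
    have hf2 : pairL.flip (qtTheta k H Q f) ∘ₗ (Rl k H Q).subtype
        = f ∘ₗ (Rl k H Q).subtype := by
      apply LinearMap.ext
      intro x
      exact hchar f x x.2
    have hg2 : pairL.flip (qtTheta k H Q g) ∘ₗ (Rl k H Q).subtype
        = g ∘ₗ (Rl k H Q).subtype := by
      apply LinearMap.ext
      intro x
      exact hchar g x x.2
    rw [hbb, hchar _ a ha, ← hw, comp_eq, hf2, hg2, ← comp_eq, hw]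
    rfl
  · -- statement 3
    rw [antipode_theta Q f, hchar _ a ha]
    rw [hchar f (Q.Sinv a) (Sinv_mem_Rl Q ha)]
    rfl
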